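/- Let (M,d) be a quasi-b-geodesic metric space, i.e. there exists C>0 such that for all x,y ∈ M there is a b-chain x = x₀,…,x_m = y (with d(x_i,x_{i+1}) ≤ b) of total length ∑ d(x_i,x_{i+1}) ≤ C·d(x,y). Then there exists C₁ ≥ 1 such that for every b₁ ≥ b and all x,y ∈ M, there exists a b₁-chain x = x₀,…,x_m = y with m ≤ ⌈C₁·d(x,y)/b₁⌉. -/
import Mathlib


open Metric

private lemma prepend_chain {M : Type*} [MetricSpace M] {b₁ : ℝ} (x : M) {m : ℕ} {c : ℕ → M}
    (h0 : dist x (c 0) ≤ b₁) (hc : ∀ i < m, dist (c i) (c (i + 1)) ≤ b₁) :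
    ∃ c' : ℕ → M, c' 0 = x ∧ c' (m + 1) = c m ∧
      ∀ i < m + 1, dist (c' i) (c' (i + 1)) ≤ b₁ := by
  refine ⟨fun i => if i = 0 then x else c (i - 1), rfl, by simp, ?_⟩
  intro i hi
  cases i with
  | zero => simpa using h0
  | succ j => simpa using hc j (by omega)

private lemma key_chain {M : Type*} [MetricSpace M] {b b₁ : ℝ} (hb : 0 < b) (hbb : b ≤ b₁) :
    ∀ m : ℕ, ∀ c : ℕ → M, (∀ i < m, dist (c i) (c (i + 1)) ≤ b) →
    ∃ (m' : ℕ) (c' : ℕ → M), c' 0 = c 0 ∧ c' m' = c m ∧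
      (∀ i < m', dist (c' i) (c' (i + 1)) ≤ b₁) ∧
      (m' : ℝ) * b₁ ≤ 2 * (∑ i ∈ Finset.range m, dist (c i) (c (i + 1))) + b₁ := by
  intro m
  induction m using Nat.strong_induction_on with
  | _ m ih =>
    intro c hc
    classical
    set L := ∑ i ∈ Finset.range m, dist (c i) (c (i + 1)) with hLdef
    have hL0 : 0 ≤ L := Finset.sum_nonneg fun i _ => dist_nonneg
    by_cases hcase : L ≤ b₁
    · refine ⟨1, fun i => if i = 0 then c 0 else c m, rfl, by simp, ?_, ?_⟩
      · intro i hi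
        interval_cases i
        simpa using le_trans (dist_le_range_sum_dist c m) hcase
      · push_cast
        linarith
    · push_neg at hcase
      have hb₁ : 0 < b₁ := lt_of_lt_of_le hb hbb
      set S : ℕ → ℝ := fun j => ∑ i ∈ Finset.range j, dist (c i) (c (i + 1)) with hSdef
      have hm1 : 1 ≤ m := by
        by_contra h
        have hm0 : m = 0 := by omega
        rw [hLdef, hm0] at hcase
        simp at hcase
        linarith
      set k := Nat.findGreatest (fun j => S j ≤ b₁) m with hkdef
      have hkm' : k ≤ m := Nat.findGreatest_le m
      have hSk : S k ≤ b₁ := by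
        exact Nat.findGreatest_spec (P := fun j => S j ≤ b₁) (Nat.zero_le m)
          (by simpa [hSdef] using hb₁.le)
      have hk1 : 1 ≤ k := Nat.le_findGreatest hm1
        (by simpa [hSdef] using le_trans (hc 0 hm1) hbb)
      have hkm : k < m := by
        rcases lt_or_eq_of_le hkm' with h | h
        · exact h
        · exfalso; rw [h] at hSk; exact absurd hSk (not_le.mpr hcase)
      have hSk1 : b₁ < S (k + 1) := by
        have := Nat.findGreatest_is_greatest (P := fun j => S j ≤ b₁)
          (lt_add_one k) (by omega)
        exact not_le.mp this
      have hd0k : dist (c 0) (c k) ≤ S k := dist_le_range_sum_dist c k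
      have hsplit : ∀ j, j ≤ m →
          L = S j + ∑ i ∈ Finset.range (m - j), dist (c (j + i)) (c (j + i + 1)) := by
        intro j hj
        have h1 : j + (m - j) = m := by omega
        have h2 := Finset.sum_range_add (fun i => dist (c i) (c (i + 1))) j (m - j)
        rw [h1] at h2
        simpa [hLdef, hSdef] using h2
      by_cases hhalf : b₁ ≤ 2 * S k
      · -- one jump from c 0 to c k, then recurse on the chain from k
        obtain ⟨m'', c'', h0'', hend'', hstep'', hbound''⟩ :=
          ih (m - k) (by omega) (fun i => c (k + i))
            (fun i hi => hc (k + i) (by omega))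
        have hend : c'' m'' = c m := by
          rw [hend'']
          congr 1
          omega
        have hd0 : dist (c 0) (c'' 0) ≤ b₁ := by
          rw [h0'']
          simpa using le_trans hd0k hSk
        obtain ⟨c', hc0', hcm', hstep'⟩ := prepend_chain (c 0) hd0 hstep''
        refine ⟨m'' + 1, c', hc0', by rw [hcm', hend], hstep', ?_⟩
        have hsum2 := hsplit k hkm'
        have hbound2 : (m'' : ℝ) * b₁ ≤
            2 * (∑ i ∈ Finset.range (m - k), dist (c (k + i)) (c (k + i + 1))) + b₁ := hbound''
        push_cast
        linarith
      · -- two jumps: c 0 → c k → c (k+1), then recurse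
        push_neg at hhalf
        have hk1m : k + 1 ≤ m := hkm
        obtain ⟨m'', c'', h0'', hend'', hstep'', hbound''⟩ :=
          ih (m - (k + 1)) (by omega) (fun i => c (k + 1 + i))
            (fun i hi => hc (k + 1 + i) (by omega))
        have hend : c'' m'' = c m := by
          rw [hend'']
          congr 1
          omega
        have hdk : dist (c k) (c'' 0) ≤ b₁ := by
          rw [h0'']
          simpa using le_trans (hc k hkm) hbb
        obtain ⟨c₁, hc01, hcm1, hstep1⟩ := prepend_chain (c k) hdk hstep''
        have hd0 : dist (c 0) (c₁ 0) ≤ b₁ := by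
          rw [hc01]
          exact le_trans hd0k hSk
        obtain ⟨c', hc0', hcm', hstep'⟩ := prepend_chain (c 0) hd0 hstep1
        refine ⟨m'' + 1 + 1, c', hc0', by rw [hcm', hcm1, hend], hstep', ?_⟩
        have hsum2 := hsplit (k + 1) hk1m
        have hbound2 : (m'' : ℝ) * b₁ ≤
            2 * (∑ i ∈ Finset.range (m - (k + 1)), dist (c (k + 1 + i)) (c (k + 1 + i + 1))) + b₁ :=
          hbound''
        push_cast
        linarith

/-- **Chain lemma.** If `(M,d)` is quasi-`b`-geodesic (there is `C > 0` such that any two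
points `x, y` are joined by a `b`-chain of total length at most `C * dist x y`), then there
exists `C₁ ≥ 1` such that for every `b₁ ≥ b` and all `x, y` there is a `b₁`-chain from `x`
to `y` with at most `⌈C₁ * dist x y / b₁⌉` steps. -/
theorem chain_lemma {M : Type*} [MetricSpace M] (b : ℝ) (hb : 0 < b)
    (hqg : ∃ C : ℝ, 0 < C ∧ ∀ x y : M, ∃ (m : ℕ) (c : ℕ → M),
      c 0 = x ∧ c m = y ∧ (∀ i < m, dist (c i) (c (i + 1)) ≤ b) ∧
      ∑ i ∈ Finset.range m, dist (c i) (c (i + 1)) ≤ C * dist x y) :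
    ∃ C₁ : ℝ, 1 ≤ C₁ ∧ ∀ b₁ : ℝ, b ≤ b₁ → ∀ x y : M, ∃ (m : ℕ) (c : ℕ → M),
      c 0 = x ∧ c m = y ∧ (∀ i < m, dist (c i) (c (i + 1)) ≤ b₁) ∧
      m ≤ ⌈C₁ * dist x y / b₁⌉₊ := by
  obtain ⟨C, hC, hq⟩ := hqg
  refine ⟨max 1 (4 * C), le_max_left _ _, ?_⟩
  intro b₁ hbb x y
  have hb₁ : 0 < b₁ := lt_of_lt_of_le hb hbb
  by_cases hxy : x = y
  · subst hxy
    exact ⟨0, fun _ => x, rfl, rfl, fun i hi => absurd hi (by omega), Nat.zero_le _⟩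
  · have hd : 0 < dist x y := dist_pos.mpr hxy
    obtain ⟨m, c, hc0, hcm, hstep, hsum⟩ := hq x y
    obtain ⟨m', c', h0', hm', hstep', hbound⟩ := key_chain hb hbb m c hstep
    refine ⟨m', c', by rw [h0', hc0], by rw [hm', hcm], hstep', ?_⟩
    by_cases h2 : m' ≤ 1
    · have hpos : 0 < ⌈max 1 (4 * C) * dist x y / b₁⌉₊ := by
        apply Nat.ceil_pos.mpr
        apply div_pos _ hb₁
        have : (0:ℝ) < 1 * dist x y := by linarith
        exact lt_of_lt_of_le this (by gcongr; exact le_max_left _ _)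
      omega
    · push_neg at h2
      have h2' : (2 : ℝ) ≤ (m' : ℝ) := by exact_mod_cast h2
      have h1 : (m' : ℝ) * b₁ ≤ 2 * (C * dist x y) + b₁ :=
        le_trans hbound (by linarith)
      have h3 : (m' : ℝ) * b₁ ≤ 4 * C * dist x y := by
        nlinarith [mul_pos hb₁ (sub_pos.mpr (lt_of_lt_of_le one_lt_two h2'))]
      have h4 : (m' : ℝ) ≤ max 1 (4 * C) * dist x y / b₁ := by
        rw [le_div_iff₀ hb₁]
        refine le_trans h3 ?_
        gcongr
        exact le_max_right _ _
      exact_mod_cast le_trans h4 (Nat.le_ceil _)
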